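/- Let μ and ν be faithful, diffuse Borel probability measures on [0,1] with cumulative distribution functions F and G, and let h = F⁻¹ ∘ G be the increasing rearrangement homeomorphism. Then for every p ∈ [1, ∞), the L^p(ν)-norm of h − id satisfies ‖h − id‖_{L^p(ν)} ≤ W_p(μ, ν). -/

import Mathlib

open MeasureTheory

/-- The unit interval `[0,1]` as a subtype of `ℝ`. -/
abbrev UnitInt : Type := Set.Icc (0 : ℝ) 1

/-- The cumulative distribution function of a measure on `[0,1]`: `F(x) = μ([0,x])`. -/
noncomputable def cdf01 (μ : Measure UnitInt) (x : UnitInt) : ℝ :=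
  (μ (Set.Iic x)).toReal

/-- The `p`-Wasserstein distance between two Borel measures, defined as the infimum
over couplings `π` of `μ` and `ν` of `(∫ d(x,y)^p dπ)^(1/p)`. -/
noncomputable def Wp {E : Type*} [MeasurableSpace E] [PseudoMetricSpace E] (p : ℝ)
    (μ ν : Measure E) : ℝ :=
  sInf ((fun π : Measure (E × E) => (∫ z, dist z.1 z.2 ^ p ∂π) ^ (1 / p)) ''
    {π | π.map Prod.fst = μ ∧ π.map Prod.snd = ν})


open Set

noncomputable def Dfun (p : ℝ) (u : ℝ) : ℝ := p * (|u| ^ (p - 1) * Real.sign u)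

lemma sgnpow_mono {p : ℝ} (hp : 1 ≤ p) : Monotone (fun u : ℝ => |u| ^ (p - 1) * Real.sign u) := by
  intro u v huv
  have hq : 0 ≤ p - 1 := by linarith
  rcases lt_trichotomy u 0 with hu | hu | hu
  · rcases lt_trichotomy v 0 with hv | hv | hv
    · simp only [Real.sign_of_neg hu, Real.sign_of_neg hv, mul_neg_one, neg_le_neg_iff]
      exact Real.rpow_le_rpow (abs_nonneg v) (by rw [abs_of_neg hu, abs_of_neg hv]; linarith) hq
    · subst hv; simp [Real.sign_of_neg hu]
      positivity
    · have h1 : |u| ^ (p-1) * Real.sign u ≤ 0 := by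
        rw [Real.sign_of_neg hu]; nlinarith [Real.rpow_nonneg (abs_nonneg u) (p-1)]
      have h2 : 0 ≤ |v| ^ (p-1) * Real.sign v := by
        rw [Real.sign_of_pos hv]; nlinarith [Real.rpow_nonneg (abs_nonneg v) (p-1)]
      simp only []; linarith
  · subst hu
    have hv : 0 ≤ v := huv
    simp only [abs_zero, Real.sign_zero, mul_zero]
    rcases eq_or_lt_of_le hv with h | h
    · simp [← h]
    · rw [Real.sign_of_pos h]; positivity
  · have hv : 0 < v := lt_of_lt_of_le hu huv
    simp only []
    rw [Real.sign_of_pos hu, Real.sign_of_pos hv, mul_one, mul_one]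
    exact Real.rpow_le_rpow (abs_nonneg u) (by rw [abs_of_pos hu, abs_of_pos hv]; exact huv) hq

lemma Dfun_mono {p : ℝ} (hp : 1 ≤ p) : Monotone (Dfun p) := by
  intro u v huv
  exact mul_le_mul_of_nonneg_left (sgnpow_mono hp huv) (by linarith)

lemma Dfun_abs_le {p : ℝ} (hp : 1 ≤ p) {u M : ℝ} (h : |u| ≤ M) :
    |Dfun p u| ≤ p * max 1 M ^ (p - 1) := by
  have hq : 0 ≤ p - 1 := by linarith
  have h1 : |u| ^ (p - 1) ≤ max 1 M ^ (p - 1) :=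
    Real.rpow_le_rpow (abs_nonneg u) (h.trans (le_max_right _ _)) hq
  have h2 : |Real.sign u| ≤ 1 := by
    rcases lt_trichotomy u 0 with h' | h' | h' <;>
      simp [Real.sign_of_neg, Real.sign_of_pos, *]
  have h3 : (0:ℝ) ≤ |u| ^ (p-1) := Real.rpow_nonneg (abs_nonneg u) _
  rw [Dfun, abs_mul, abs_mul, abs_of_pos (by linarith : (0:ℝ) < p), abs_of_nonneg h3]
  calc p * (|u| ^ (p-1) * |Real.sign u|) ≤ p * (|u| ^ (p-1) * 1) := by
        apply mul_le_mul_of_nonneg_left _ (by linarith)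
        exact mul_le_mul_of_nonneg_left h2 h3
    _ = p * |u| ^ (p-1) := by ring
    _ ≤ p * max 1 M ^ (p-1) := mul_le_mul_of_nonneg_left h1 (by linarith)

lemma continuous_abs_rpow {p : ℝ} (hp : 1 ≤ p) : Continuous (fun v : ℝ => |v| ^ p) :=
  continuous_abs.rpow_const (fun _ => Or.inr (by linarith))

lemma myHasDerivAt_abs_rpow {p : ℝ} (hp : 1 ≤ p) {u : ℝ} (hu : u ≠ 0) :
    HasDerivAt (fun v : ℝ => |v| ^ p) (Dfun p u) u := by
  rcases hu.lt_or_gt with hu' | hu'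
  · have : HasDerivAt (fun v : ℝ => (-v) ^ p) (p * (-u) ^ (p - 1) * (-1)) u := by
      have h1 : HasDerivAt (fun v : ℝ => -v) (-1) u := (hasDerivAt_id u).neg
      have h2 : HasDerivAt (fun w : ℝ => w ^ p) (p * (-u) ^ (p - 1)) (-u) :=
        Real.hasDerivAt_rpow_const (Or.inl (by linarith))
      simpa [Function.comp_def] using h2.comp u h1
    have key : HasDerivAt (fun v : ℝ => |v| ^ p) (p * (-u) ^ (p - 1) * (-1)) u := by
      refine this.congr_of_eventuallyEq ?_
      filter_upwards [eventually_lt_nhds hu'] with v hv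
      rw [abs_of_neg hv]
    convert key using 1
    rw [Dfun, Real.sign_of_neg hu', abs_of_neg hu']; ring
  · have h2 : HasDerivAt (fun w : ℝ => w ^ p) (p * u ^ (p - 1)) u :=
      Real.hasDerivAt_rpow_const (Or.inl (ne_of_gt hu'))
    have key : HasDerivAt (fun v : ℝ => |v| ^ p) (p * u ^ (p - 1)) u := by
      refine h2.congr_of_eventuallyEq ?_
      filter_upwards [eventually_gt_nhds hu'] with v hv
      rw [abs_of_pos hv]
    convert key using 1
    rw [Dfun, Real.sign_of_pos hu', abs_of_pos hu']; ring

lemma intervalIntegrable_Dfun_sub {p : ℝ} (hp : 1 ≤ p) (y a b : ℝ) :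
    IntervalIntegrable (fun s => Dfun p (s - y)) volume a b := by
  rw [intervalIntegrable_iff]
  have hmble : Measurable fun s : ℝ => Dfun p (s - y) :=
    (Dfun_mono hp).measurable.comp (measurable_id.sub_const y)
  refine Measure.integrableOn_of_bounded (M := p * max 1 (|a - y| + |b - y|) ^ (p - 1))
    (by rw [Set.uIoc]; exact measure_Ioc_lt_top.ne) hmble.aestronglyMeasurable ?_
  refine (ae_restrict_iff' measurableSet_uIoc).2 (Filter.Eventually.of_forall fun s hs => ?_)
  refine Dfun_abs_le hp ?_
  rcases Set.mem_uIoc.1 hs with ⟨h1, h2⟩ | ⟨h1, h2⟩ <;>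
  · have e1 := le_abs_self (a - y); have e2 := neg_abs_le (a - y)
    have e3 := le_abs_self (b - y); have e4 := neg_abs_le (b - y)
    rcases le_total (s - y) 0 with h | h
    · rw [abs_of_nonpos h]; linarith
    · rw [abs_of_nonneg h]; linarith

lemma ftc_piece {p : ℝ} (hp : 1 ≤ p) {y a b : ℝ} (hab : a ≤ b) (hy : y ∉ Set.Ioo a b) :
    ∫ s in a..b, Dfun p (s - y) = |b - y| ^ p - |a - y| ^ p := by
  refine intervalIntegral.integral_eq_sub_of_hasDeriv_right_of_le (f := fun s => |s - y| ^ p)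
    (f' := fun s => Dfun p (s - y)) hab
    (Continuous.continuousOn ((continuous_abs_rpow hp).comp (continuous_id.sub continuous_const)))
    (fun s hs => ?_) (intervalIntegrable_Dfun_sub hp y a b)
  have hsy : s - y ≠ 0 := by
    intro h0
    exact hy (by rwa [sub_eq_zero.1 h0] at hs)
  have := (myHasDerivAt_abs_rpow hp hsy).comp s (((hasDerivAt_id s).sub_const y))
  simpa [Function.comp_def] using this.hasDerivWithinAt

lemma ftc_full {p : ℝ} (hp : 1 ≤ p) {y a b : ℝ} (hab : a ≤ b) :
    ∫ s in a..b, Dfun p (s - y) = |b - y| ^ p - |a - y| ^ p := by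
  rcases le_or_gt y a with h | h
  · exact ftc_piece hp hab (fun hc => absurd hc.1 (not_lt.2 h))
  · rcases le_or_gt b y with h2 | h2
    · exact ftc_piece hp hab (fun hc => absurd hc.2 (not_lt.2 h2))
    · rw [← intervalIntegral.integral_add_adjacent_intervals
        (intervalIntegrable_Dfun_sub hp y a y) (intervalIntegrable_Dfun_sub hp y y b),
        ftc_piece hp h.le (fun hc => absurd hc.2 (lt_irrefl y)),
        ftc_piece hp h2.le (fun hc => absurd hc.1 (lt_irrefl y))]
      ring

lemma cdf01_strictMono {μ : Measure UnitInt} [IsProbabilityMeasure μ]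
    (hμ : ∀ U : Set UnitInt, IsOpen U → U.Nonempty → 0 < μ U) : StrictMono (cdf01 μ) := by
  intro x y hxy
  have hmid : ((x:ℝ) + y) / 2 ∈ Set.Icc (0:ℝ) 1 := by
    constructor
    · have := x.2.1; have := y.2.1; linarith
    · have := x.2.2; have := y.2.2; linarith
  set m : UnitInt := ⟨((x:ℝ) + y) / 2, hmid⟩
  have hxm : x < m := by
    rw [← Subtype.coe_lt_coe] at hxy ⊢
    simp only [m]; linarith
  have hmy : m < y := by
    rw [← Subtype.coe_lt_coe] at hxy ⊢
    simp only [m]; linarith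
  have hpos : 0 < μ (Set.Ioo x y) :=
    hμ _ isOpen_Ioo ⟨m, hxm, hmy⟩
  have hdisj : Disjoint (Set.Iic x) (Set.Ioo x y) := by
    rw [Set.disjoint_left]
    exact fun t ht ht' => absurd (lt_of_le_of_lt ht ht'.1) (lt_irrefl t)
  have hunion : Set.Iic x ∪ Set.Ioo x y ⊆ Set.Iic y := by
    rintro t (ht | ht)
    · exact le_trans ht hxy.le
    · exact ht.2.le
  have hlt : μ (Set.Iic x) < μ (Set.Iic y) := by
    calc μ (Set.Iic x) < μ (Set.Iic x) + μ (Set.Ioo x y) := by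
          refine ENNReal.lt_add_right (measure_ne_top _ _) hpos.ne'
      _ = μ (Set.Iic x ∪ Set.Ioo x y) := (measure_union hdisj measurableSet_Ioo).symm
      _ ≤ μ (Set.Iic y) := measure_mono hunion
  exact ENNReal.toReal_lt_toReal (measure_ne_top _ _) (measure_ne_top _ _) |>.2 hlt

lemma cdf01_eq_measure {μ : Measure UnitInt} [IsProbabilityMeasure μ] {ν : Measure UnitInt}
    [IsProbabilityMeasure ν] {a b : UnitInt} (hab : cdf01 μ a = cdf01 ν b) :
    μ (Set.Iic a) = ν (Set.Iic b) :=
  (ENNReal.toReal_eq_toReal_iff' (measure_ne_top _ _) (measure_ne_top _ _)).1 hab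

lemma map_h_eq {μ ν : Measure UnitInt} [IsProbabilityMeasure μ] [IsProbabilityMeasure ν]
    [NullSingletonClass μ] [NullSingletonClass ν]
    (hμ : ∀ U : Set UnitInt, IsOpen U → U.Nonempty → 0 < μ U)
    (hν : ∀ U : Set UnitInt, IsOpen U → U.Nonempty → 0 < ν U)
    {h : UnitInt → UnitInt} (hh : ∀ t : UnitInt, cdf01 μ (h t) = cdf01 ν t) :
    ν.map h = μ := by
  have smμ := cdf01_strictMono hμ
  have smν := cdf01_strictMono hν
  have hSM : StrictMono h := by
    intro t t' htt
    refine smμ.lt_iff_lt.1 ?_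
    rw [hh, hh]; exact smν htt
  have hmeas : Measurable h := hSM.monotone.measurable
  refine Measure.ext_of_Iic _ _ (fun x => ?_)
  rw [Measure.map_apply hmeas measurableSet_Iic]
  set A : Set UnitInt := h ⁻¹' (Set.Iic x) with hA
  have z0mem : (0:ℝ) ∈ Set.Icc (0:ℝ) 1 := by norm_num
  set z0 : UnitInt := ⟨0, z0mem⟩ with hz0
  have hz0le : ∀ t : UnitInt, z0 ≤ t := fun t => t.2.1
  have hz0A : z0 ∈ A := by
    have hG0 : cdf01 ν z0 = 0 := by
      have hs : Set.Iic z0 = {z0} := by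
        ext t; simp only [Set.mem_Iic, Set.mem_singleton_iff]
        exact ⟨fun ht => le_antisymm ht (hz0le t), fun ht => ht.le⟩
      rw [cdf01, hs, measure_singleton]; simp
    have hle : cdf01 μ (h z0) ≤ cdf01 μ x := by
      rw [hh, hG0]; exact ENNReal.toReal_nonneg
    exact smμ.le_iff_le.1 hle
  set S := (Subtype.val '' A) with hS
  have hSne : S.Nonempty := ⟨(z0 : ℝ), z0, hz0A, rfl⟩
  have hSbdd : BddAbove S := ⟨1, by rintro z ⟨t, -, rfl⟩; exact t.2.2⟩
  set t0v := sSup S with ht0v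
  have ht0_ge : (0:ℝ) ≤ t0v := le_csSup hSbdd ⟨z0, hz0A, rfl⟩
  have ht0_le : t0v ≤ 1 := Real.sSup_le (by rintro z ⟨t, -, rfl⟩; exact t.2.2) zero_le_one
  set T0 : UnitInt := ⟨t0v, ht0_ge, ht0_le⟩ with hT0
  have hAle : ∀ t ∈ A, t ≤ T0 := fun t ht =>
    Subtype.coe_le_coe.1 (le_csSup hSbdd ⟨t, ht, rfl⟩)
  have hltA : ∀ t : UnitInt, t < T0 → t ∈ A := by
    intro t ht
    obtain ⟨z, ⟨t', ht', rfl⟩, hz⟩ :=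
      exists_lt_of_lt_csSup hSne (Subtype.coe_lt_coe.2 ht)
    have : h t ≤ h t' := hSM.monotone (Subtype.coe_le_coe.1 hz.le)
    exact this.trans ht'
  have hIic_eq : ν (Set.Iic T0) = ν (Set.Iio T0) := (measure_congr (Iio_ae_eq_Iic (a := T0))).symm
  have hνA : ν A = ν (Set.Iic T0) := by
    refine le_antisymm (measure_mono (fun t ht => hAle t ht)) ?_
    rw [hIic_eq]
    exact measure_mono (fun t ht => hltA t ht)
  rw [hνA]
  -- key1 : ν (Iic T0) ≤ μ (Iic x)
  have key1 : ν (Set.Iic T0) ≤ μ (Set.Iic x) := by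
    by_cases hT0A : T0 ∈ A
    · rw [← cdf01_eq_measure (hh T0)]
      exact measure_mono (Set.Iic_subset_Iic.2 hT0A)
    · have ht0pos : 0 < t0v := by
        rcases ht0_ge.lt_or_eq with h' | h'
        · exact h'
        · exfalso; apply hT0A
          have : T0 = z0 := by
            rw [hT0, hz0]; exact Subtype.ext h'.symm
          rw [this]; exact hz0A
      obtain ⟨u, hu_mono, hu_lt, hu_tendsto⟩ := exists_seq_strictMono_tendsto t0v
      set w : ℕ → UnitInt := fun n =>
        ⟨max 0 (u n), le_max_left _ _, max_le zero_le_one ((hu_lt n).le.trans ht0_le)⟩ with hw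
      have hwlt : ∀ n, w n < T0 := fun n =>
        Subtype.coe_lt_coe.1 (max_lt ht0pos (hu_lt n))
      have hwmono : Monotone w := fun m n hmn =>
        Subtype.coe_le_coe.1 (max_le_max le_rfl (hu_mono.monotone hmn))
      have hunion : (⋃ n, Set.Iic (w n)) = Set.Iio T0 := by
        ext t
        simp only [Set.mem_iUnion, Set.mem_Iic, Set.mem_Iio]
        constructor
        · rintro ⟨n, hn⟩; exact lt_of_le_of_lt hn (hwlt n)
        · intro ht
          obtain ⟨n, hn⟩ := (hu_tendsto.eventually (eventually_gt_nhds
            (Subtype.coe_lt_coe.2 ht))).exists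
          exact ⟨n, Subtype.coe_le_coe.1 (hn.le.trans (le_max_right _ _))⟩
      have hmono' : Monotone (fun n => Set.Iic (w n)) :=
        fun m n hmn => Set.Iic_subset_Iic.2 (hwmono hmn)
      have hdir : Directed (· ⊆ ·) (fun n => Set.Iic (w n)) := hmono'.directed_le
      calc ν (Set.Iic T0) = ν (Set.Iio T0) := hIic_eq
        _ = ⨆ n, ν (Set.Iic (w n)) := by rw [← hunion, hdir.measure_iUnion]
        _ ≤ μ (Set.Iic x) := by
            refine iSup_le fun n => ?_
            rw [← cdf01_eq_measure (hh (w n))]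
            exact measure_mono (Set.Iic_subset_Iic.2 (hltA (w n) (hwlt n)))
  -- key2 : μ (Iic x) ≤ ν (Iic T0)
  have key2 : μ (Set.Iic x) ≤ ν (Set.Iic T0) := by
    rcases ht0_le.lt_or_eq with ht0lt | ht0eq
    · obtain ⟨u, hu_anti, hu_gt, hu_tendsto⟩ := exists_seq_strictAnti_tendsto t0v
      set w : ℕ → UnitInt := fun n =>
        ⟨min 1 (u n), le_min zero_le_one (ht0_ge.trans (hu_gt n).le), min_le_left _ _⟩ with hw
      have hwgt : ∀ n, T0 < w n := fun n =>
        Subtype.coe_lt_coe.1 (lt_min ht0lt (hu_gt n))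
      have hwanti : Antitone w := fun m n hmn =>
        Subtype.coe_le_coe.1 (min_le_min le_rfl (hu_anti.antitone hmn))
      have hinter : (⋂ n, Set.Iic (w n)) = Set.Iic T0 := by
        ext t
        simp only [Set.mem_iInter, Set.mem_Iic]
        constructor
        · intro ht
          refine Subtype.coe_le_coe.1 (ge_of_tendsto hu_tendsto
            (Filter.Eventually.of_forall fun n => ?_))
          exact le_trans (Subtype.coe_le_coe.2 (ht n)) (min_le_right _ _)
        · exact fun ht n => ht.trans (hwgt n).le
      have hanti' : Antitone (fun n => Set.Iic (w n)) :=
        fun m n hmn => Set.Iic_subset_Iic.2 (hwanti hmn)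
      have hdir : Directed (· ⊇ ·) (fun n => Set.Iic (w n)) := hanti'.directed_ge
      have : ν (Set.Iic T0) = ⨅ n, ν (Set.Iic (w n)) := by
        rw [← hinter, Directed.measure_iInter (fun n => measurableSet_Iic.nullMeasurableSet) hdir
          ⟨0, measure_ne_top _ _⟩]
      rw [this]
      refine le_iInf fun n => ?_
      have hwn : w n ∉ A := fun hc => absurd (hAle _ hc) (not_le.2 (hwgt n))
      have hx_lt : x < h (w n) := not_le.1 hwn
      rw [← cdf01_eq_measure (hh (w n))]
      exact measure_mono (Set.Iic_subset_Iic.2 hx_lt.le)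
    · have : Set.Iic T0 = Set.univ := by
        ext t; simp only [Set.mem_Iic, Set.mem_univ, iff_true]
        refine Subtype.coe_le_coe.1 ?_
        show (t:ℝ) ≤ t0v
        rw [ht0eq]; exact t.2.2
      rw [this, measure_univ]
      exact prob_le_one
  exact le_antisymm key1 key2

noncomputable def gfun (h : UnitInt → UnitInt) (s : ℝ) : ℝ :=
  sSup (Subtype.val '' {y : UnitInt | (h y : ℝ) ≤ s})

noncomputable def xifun (p : ℝ) (h : UnitInt → UnitInt) (s : ℝ) : ℝ :=
  Dfun p (max 0 (min 1 s) - gfun h s)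

noncomputable def phifun (p : ℝ) (h : UnitInt → UnitInt) (r : ℝ) : ℝ :=
  ∫ s in (0:ℝ)..r, xifun p h s

section Potential
variable {p : ℝ} {h : UnitInt → UnitInt}

lemma gfun_bddAbove (h : UnitInt → UnitInt) (s : ℝ) :
    BddAbove (Subtype.val '' {y : UnitInt | (h y : ℝ) ≤ s}) :=
  ⟨1, by rintro z ⟨t, -, rfl⟩; exact t.2.2⟩

lemma gfun_le_one (h : UnitInt → UnitInt) (s : ℝ) : gfun h s ≤ 1 :=
  Real.sSup_le (by rintro z ⟨t, -, rfl⟩; exact t.2.2) zero_le_one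

lemma gfun_nonneg (h : UnitInt → UnitInt) (s : ℝ) : 0 ≤ gfun h s := by
  rcases Set.eq_empty_or_nonempty {y : UnitInt | (h y : ℝ) ≤ s} with he | ⟨y, hy⟩
  · rw [gfun, he]; simp [Real.sSup_empty]
  · exact le_trans y.2.1 (le_csSup (gfun_bddAbove h s) ⟨y, hy, rfl⟩)

lemma gfun_mono (h : UnitInt → UnitInt) : Monotone (gfun h) := by
  intro s s' hss
  rcases Set.eq_empty_or_nonempty {y : UnitInt | (h y : ℝ) ≤ s} with he | hne
  · rw [gfun, he]; simp only [Set.image_empty, Real.sSup_empty]; exact gfun_nonneg h s'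
  · exact csSup_le_csSup (gfun_bddAbove h s') (hne.image _)
      (Set.image_mono (fun y hy => le_trans hy hss))

lemma gfun_ge {s : ℝ} {y : UnitInt} (hy : (h y : ℝ) ≤ s) : (y : ℝ) ≤ gfun h s :=
  le_csSup (gfun_bddAbove h s) ⟨y, hy, rfl⟩

lemma gfun_le (hSM : StrictMono h) {s : ℝ} {y : UnitInt} (hy : s ≤ (h y : ℝ)) :
    gfun h s ≤ (y : ℝ) := by
  refine Real.sSup_le ?_ y.2.1
  rintro z ⟨t, ht, rfl⟩
  exact Subtype.coe_le_coe.2 (hSM.le_iff_le.1 (Subtype.coe_le_coe.1 (le_trans ht hy)))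

lemma xifun_measurable (hp : 1 ≤ p) (h : UnitInt → UnitInt) : Measurable (xifun p h) := by
  refine (Dfun_mono hp).measurable.comp (Measurable.sub ?_ (gfun_mono h).measurable)
  exact (continuous_const.max (continuous_const.min continuous_id)).measurable

lemma xifun_abs_le (hp : 1 ≤ p) (h : UnitInt → UnitInt) (s : ℝ) : |xifun p h s| ≤ p := by
  have h1 : |max 0 (min 1 s) - gfun h s| ≤ 1 := by
    have h2 : (0:ℝ) ≤ max 0 (min 1 s) := le_max_left _ _
    have h3 : max 0 (min 1 s) ≤ 1 := max_le zero_le_one (min_le_left _ _)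
    have h4 := gfun_nonneg h s
    have h5 := gfun_le_one h s
    rw [abs_le]; constructor <;> linarith
  have := Dfun_abs_le hp h1
  rwa [max_self, Real.one_rpow, mul_one] at this

lemma xifun_intble (hp : 1 ≤ p) (h : UnitInt → UnitInt) (a b : ℝ) :
    IntervalIntegrable (xifun p h) volume a b := by
  rw [intervalIntegrable_iff]
  refine Measure.integrableOn_of_bounded (M := p)
    (by rw [Set.uIoc]; exact measure_Ioc_lt_top.ne)
    (xifun_measurable hp h).aestronglyMeasurable ?_
  exact Filter.Eventually.of_forall fun s => by
    rw [Real.norm_eq_abs]; exact xifun_abs_le hp h s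

lemma phifun_cont (hp : 1 ≤ p) (h : UnitInt → UnitInt) : Continuous (phifun p h) :=
  intervalIntegral.continuous_primitive (xifun_intble hp h) 0

lemma phifun_abs_le (hp : 1 ≤ p) (h : UnitInt → UnitInt) {r : ℝ} (hr : r ∈ Set.Icc (0:ℝ) 1) :
    |phifun p h r| ≤ p := by
  have := intervalIntegral.norm_integral_le_of_norm_le_const
    (C := p) (f := xifun p h) (a := 0) (b := r)
    (fun s _ => by rw [Real.norm_eq_abs]; exact xifun_abs_le hp h s)
  rw [Real.norm_eq_abs] at this
  refine this.trans ?_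
  have : |r - 0| ≤ 1 := by rw [sub_zero, abs_of_nonneg hr.1]; exact hr.2
  nlinarith [this, abs_nonneg (r - (0:ℝ))]

lemma potential_ineq (hp : 1 ≤ p) (hSM : StrictMono h) (x y : UnitInt) :
    phifun p h x + (|(h y : ℝ) - y| ^ p - phifun p h (h y)) ≤ |(x : ℝ) - y| ^ p := by
  set a : ℝ := (h y : ℝ) with ha
  set b : ℝ := (x : ℝ) with hb
  set yv : ℝ := (y : ℝ) with hyv
  have hphidiff : phifun p h b - phifun p h a = ∫ s in a..b, xifun p h s := by
    rw [phifun, phifun]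
    exact intervalIntegral.integral_interval_sub_left (xifun_intble hp h 0 b)
      (xifun_intble hp h 0 a)
  have key : phifun p h b - phifun p h a ≤ |b - yv| ^ p - |a - yv| ^ p := by
    rcases le_total a b with hab | hba
    · rw [hphidiff, ← ftc_full hp hab (y := yv)]
      refine intervalIntegral.integral_mono_on hab (xifun_intble hp h a b)
        (intervalIntegrable_Dfun_sub hp yv a b) (fun s hs => ?_)
      have hs0 : (0:ℝ) ≤ s := le_trans (h y).2.1 hs.1
      have hs1 : s ≤ 1 := le_trans hs.2 x.2.2
      have hclamp : max 0 (min 1 s) = s := by rw [min_eq_right hs1, max_eq_right hs0]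
      rw [xifun, hclamp]
      refine Dfun_mono hp ?_
      have := gfun_ge (h := h) (hs.1 : a ≤ s)
      linarith
    · have h2 : ∫ s in b..a, Dfun p (s - yv) ≤ ∫ s in b..a, xifun p h s := by
        refine intervalIntegral.integral_mono_on hba
          (intervalIntegrable_Dfun_sub hp yv b a) (xifun_intble hp h b a) (fun s hs => ?_)
        have hs0 : (0:ℝ) ≤ s := le_trans x.2.1 hs.1
        have hs1 : s ≤ 1 := le_trans hs.2 (h y).2.2
        have hclamp : max 0 (min 1 s) = s := by rw [min_eq_right hs1, max_eq_right hs0]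
        rw [xifun, hclamp]
        refine Dfun_mono hp ?_
        have := gfun_le hSM (hs.2 : s ≤ a)
        linarith
      have h3 : ∫ s in b..a, Dfun p (s - yv) = |a - yv| ^ p - |b - yv| ^ p :=
        ftc_full hp hba
      have h4 : phifun p h b - phifun p h a = -∫ s in b..a, xifun p h s := by
        rw [hphidiff, intervalIntegral.integral_symm]
      linarith
  linarith

end Potential

lemma integrable_of_bdd {E : Type*} [MeasurableSpace E] {m : Measure E} [IsFiniteMeasure m]
    {f : E → ℝ} (hf : AEStronglyMeasurable f m) (C : ℝ) (hb : ∀ x, |f x| ≤ C) :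
    Integrable f m :=
  Integrable.mono' (integrable_const C) hf
    (Filter.Eventually.of_forall fun x => by rw [Real.norm_eq_abs]; exact hb x)

lemma dist_le_one (x y : UnitInt) : dist x y ≤ 1 := by
  rw [Subtype.dist_eq, Real.dist_eq]
  have h1 := x.2.1; have h2 := x.2.2; have h3 := y.2.1; have h4 := y.2.2
  rw [abs_le]; constructor <;> linarith

lemma coupling_bound {μ ν : Measure UnitInt} [IsProbabilityMeasure μ] [IsProbabilityMeasure ν]
    [NullSingletonClass μ] [NullSingletonClass ν]
    (hμ : ∀ U : Set UnitInt, IsOpen U → U.Nonempty → 0 < μ U)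
    (hν : ∀ U : Set UnitInt, IsOpen U → U.Nonempty → 0 < ν U)
    {h : UnitInt → UnitInt} (hh : ∀ t : UnitInt, cdf01 μ (h t) = cdf01 ν t)
    {p : ℝ} (hp : 1 ≤ p) (π : Measure (UnitInt × UnitInt))
    (hfst : π.map Prod.fst = μ) (hsnd : π.map Prod.snd = ν) :
    (∫ t, |(h t : ℝ) - (t : ℝ)| ^ p ∂ν) ≤ ∫ z, dist z.1 z.2 ^ p ∂π := by
  have hp0 : (0:ℝ) ≤ p := le_trans zero_le_one hp
  have smμ := cdf01_strictMono hμ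
  have smν := cdf01_strictMono hν
  have hSM : StrictMono h := by
    intro t t' htt
    refine smμ.lt_iff_lt.1 ?_
    rw [hh, hh]; exact smν htt
  have hmeas : Measurable h := hSM.monotone.measurable
  have hmap : ν.map h = μ := map_h_eq hμ hν hh
  have hπ : IsProbabilityMeasure π := by
    constructor
    have := congrArg (fun m : Measure UnitInt => m Set.univ) hfst
    simp only [Measure.map_apply measurable_fst MeasurableSet.univ, Set.preimage_univ] at this
    rw [this]; exact measure_univ
  set Φ : UnitInt → ℝ := fun t => phifun p h (t : ℝ) with hΦ
  set Ψ : UnitInt → ℝ := fun t => |(h t : ℝ) - (t : ℝ)| ^ p - phifun p h (h t : ℝ) with hΨ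
  have hΦm : Measurable Φ :=
    (phifun_cont hp h).measurable.comp continuous_subtype_val.measurable
  have hhval : Measurable fun t : UnitInt => ((h t : ℝ)) :=
    continuous_subtype_val.measurable.comp hmeas
  have hΨm : Measurable Ψ :=
    (((continuous_abs_rpow hp).measurable.comp
      (hhval.sub continuous_subtype_val.measurable)).sub
      ((phifun_cont hp h).measurable.comp hhval))
  have hΦbd : ∀ t : UnitInt, |Φ t| ≤ p := fun t => phifun_abs_le hp h t.2
  have habs1 : ∀ t : UnitInt, |(|(h t : ℝ) - (t : ℝ)| ^ p)| ≤ 1 := by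
    intro t
    have h1 : |(h t : ℝ) - (t : ℝ)| ≤ 1 := by
      have e1 := (h t).2.1; have e2 := (h t).2.2; have e3 := t.2.1; have e4 := t.2.2
      rw [abs_le]; constructor <;> linarith
    rw [abs_of_nonneg (Real.rpow_nonneg (abs_nonneg _) p)]
    exact Real.rpow_le_one (abs_nonneg _) h1 hp0
  have hΨbd : ∀ t : UnitInt, |Ψ t| ≤ 1 + p := by
    intro t
    have h2 : |phifun p h (h t : ℝ)| ≤ p := phifun_abs_le hp h (h t).2
    calc |Ψ t| ≤ |(|(h t : ℝ) - (t : ℝ)| ^ p)| + |phifun p h (h t : ℝ)| := abs_sub _ _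
      _ ≤ 1 + p := add_le_add (habs1 t) h2
  -- integrabilities
  have intΦμ : Integrable Φ μ := integrable_of_bdd hΦm.aestronglyMeasurable p hΦbd
  have intΦhν : Integrable (fun t => Φ (h t)) ν :=
    integrable_of_bdd (hΦm.comp hmeas).aestronglyMeasurable p (fun t => hΦbd _)
  have intΨν : Integrable Ψ ν := integrable_of_bdd hΨm.aestronglyMeasurable (1 + p) hΨbd
  have hintΦ1 : Integrable (fun z : UnitInt × UnitInt => Φ z.1) π :=
    integrable_of_bdd (hΦm.comp measurable_fst).aestronglyMeasurable p (fun z => hΦbd _)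
  have hintΨ2 : Integrable (fun z : UnitInt × UnitInt => Ψ z.2) π :=
    integrable_of_bdd (hΨm.comp measurable_snd).aestronglyMeasurable (1 + p) (fun z => hΨbd _)
  have hcm : Measurable fun z : UnitInt × UnitInt => dist z.1 z.2 ^ p :=
    (Continuous.rpow_const (continuous_fst.dist continuous_snd)
      (fun _ => Or.inr hp0)).measurable
  have hintc : Integrable (fun z : UnitInt × UnitInt => dist z.1 z.2 ^ p) π := by
    refine integrable_of_bdd hcm.aestronglyMeasurable 1 (fun z => ?_)
    rw [abs_of_nonneg (Real.rpow_nonneg dist_nonneg p)]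
    exact Real.rpow_le_one dist_nonneg (dist_le_one _ _) hp0
  have hpt : ∀ z : UnitInt × UnitInt, Φ z.1 + Ψ z.2 ≤ dist z.1 z.2 ^ p := by
    intro z
    rw [Subtype.dist_eq, Real.dist_eq]
    exact potential_ineq hp hSM z.1 z.2
  calc ∫ t, |(h t : ℝ) - (t : ℝ)| ^ p ∂ν
      = ∫ t, (Φ (h t) + Ψ t) ∂ν := by
        congr 1; funext t; rw [hΨ]; simp only [hΦ]; ring
    _ = (∫ t, Φ (h t) ∂ν) + ∫ t, Ψ t ∂ν := integral_add intΦhν intΨν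
    _ = (∫ x, Φ x ∂(ν.map h)) + ∫ t, Ψ t ∂ν := by
        rw [integral_map hmeas.aemeasurable hΦm.aestronglyMeasurable]
    _ = (∫ x, Φ x ∂μ) + ∫ t, Ψ t ∂ν := by rw [hmap]
    _ = (∫ z, Φ z.1 ∂π) + ∫ z, Ψ z.2 ∂π := by
        rw [← hfst, ← hsnd,
          integral_map measurable_fst.aemeasurable hΦm.aestronglyMeasurable,
          integral_map measurable_snd.aemeasurable hΨm.aestronglyMeasurable]
    _ = ∫ z, (Φ z.1 + Ψ z.2) ∂π := (integral_add hintΦ1 hintΨ2).symm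
    _ ≤ ∫ z, dist z.1 z.2 ^ p ∂π := integral_mono (hintΦ1.add hintΨ2) hintc hpt

theorem rearrangement_lp_norm_le_wasserstein
    (μ ν : Measure UnitInt) [IsProbabilityMeasure μ] [IsProbabilityMeasure ν]
    [NullSingletonClass μ] [NullSingletonClass ν]
    (hμ : ∀ U : Set UnitInt, IsOpen U → U.Nonempty → 0 < μ U)
    (hν : ∀ U : Set UnitInt, IsOpen U → U.Nonempty → 0 < ν U)
    (h : UnitInt → UnitInt) (hh : ∀ t : UnitInt, cdf01 μ (h t) = cdf01 ν t)
    (p : ℝ) (hp : 1 ≤ p) :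
    (∫ t, |(h t : ℝ) - (t : ℝ)| ^ p ∂ν) ^ (1 / p) ≤ Wp p μ ν := by
  rw [Wp]
  refine le_csInf ⟨_, ⟨μ.prod ν, ⟨⟨?_, ?_⟩, rfl⟩⟩⟩ ?_
  · rw [Measure.map_fst_prod, measure_univ, one_smul]
  · rw [Measure.map_snd_prod, measure_univ, one_smul]
  · rintro b ⟨π, ⟨hfst, hsnd⟩, rfl⟩
    refine Real.rpow_le_rpow
      (integral_nonneg fun t => Real.rpow_nonneg (abs_nonneg _) p)
      (coupling_bound hμ hν hh hp π hfst hsnd) (by positivity)
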